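/- If Y₁ and Y₂ are finite-rank strong subgroups of K^×, then Y₁ ∩ Y₂ is a strong subgroup of K^×. (The intersection of two strong sets is strong.) -/

import Mathlib

noncomputable section

namespace GreenPoints

variable {K : Type*} [Field K] [CharZero K]

/-- The rank of a (multiplicative) subgroup of `Kˣ`: the ℤ-module rank of the
underlying abelian group, i.e. the dimension over ℚ of `S ⊗ ℚ`. -/
def grpRank (S : Subgroup Kˣ) : Cardinal := Module.rank ℤ (Additive S)

/-- A subgroup of `Kˣ` has finite rank. -/
def FiniteRank (S : Subgroup Kˣ) : Prop := grpRank S < Cardinal.aleph0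

/-- The transcendence degree over ℚ of the subfield of `K` generated by a subset `s` of `K`:
the supremum of the cardinalities of subsets of `s` that are algebraically
independent over ℚ. -/
def tdSet (s : Set K) : Cardinal :=
  ⨆ t : {t : Set K // t ⊆ s ∧ AlgebraicIndependent ℚ ((↑) : t → K)}, Cardinal.mk t.1

/-- The transcendence degree over ℚ of the subfield of `K` generated by a subgroup of `Kˣ`. -/
def td (S : Subgroup Kˣ) : Cardinal := tdSet (Units.val '' (S : Set Kˣ))

/-- The predimension `δ(S) = 2·td(S) − rk(S ∩ G)` (with respect to the subgroup `G`
of green points). -/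
def delta (G S : Subgroup Kˣ) : ℤ :=
  2 * ((td S).toNat : ℤ) - ((grpRank (S ⊓ G)).toNat : ℤ)

/-- `Y` is strong in `T` (with respect to `G`): `δ(W) ≥ δ(Y)` for every finite-rank
subgroup `W` with `Y ⊆ W ⊆ T`. -/
def StrongIn (G Y T : Subgroup Kˣ) : Prop :=
  ∀ W : Subgroup Kˣ, FiniteRank W → Y ≤ W → W ≤ T → delta G Y ≤ delta G W

/-- `Y` is strong: strong in `Kˣ`. -/
def Strong (G Y : Subgroup Kˣ) : Prop := StrongIn G Y ⊤

/-- A subgroup `S` of `Kˣ` is root-closed: `x ∈ S` whenever `x^n ∈ S` for some `n ≥ 1`. -/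
def RootClosed (S : Subgroup Kˣ) : Prop :=
  ∀ (x : Kˣ) (n : ℕ), 1 ≤ n → x ^ n ∈ S → x ∈ S

/-- The subfield of `K` generated by a subgroup of `Kˣ`. -/
def fieldOf (S : Subgroup Kˣ) : Subfield K := Subfield.closure (Units.val '' (S : Set Kˣ))

/-! ### Auxiliary material -/

open Cardinal

section Aux

set_option linter.unusedSectionVars false

/-! #### Rank infrastructure -/

def submod (S : Subgroup Kˣ) : Submodule ℤ (Additive Kˣ) :=
  AddSubgroup.toIntSubmodule (Subgroup.toAddSubgroup S)

lemma submod_sup (A B : Subgroup Kˣ) : submod (A ⊔ B) = submod A ⊔ submod B := by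
  simp [submod, map_sup]

lemma submod_inf (A B : Subgroup Kˣ) : submod (A ⊓ B) = submod A ⊓ submod B := by
  simp [submod, map_inf]

lemma submod_mono {A B : Subgroup Kˣ} (h : A ≤ B) : submod A ≤ submod B := by
  simp [submod]; exact h

def submodEquiv (S : Subgroup Kˣ) : Additive ↥S ≃ₗ[ℤ] ↥(submod S) :=
  AddEquiv.toIntLinearEquiv
  { toFun := fun a => ⟨Additive.ofMul ((Additive.toMul a : ↥S) : Kˣ), (Additive.toMul a).2⟩
    invFun := fun x => Additive.ofMul (⟨Additive.toMul x.1, x.2⟩ : ↥S)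
    left_inv := fun _ => rfl
    right_inv := fun _ => rfl
    map_add' := fun _ _ => rfl }

lemma grpRank_eq (S : Subgroup Kˣ) : grpRank S = Module.rank ℤ ↥(submod S) :=
  (submodEquiv S).rank_eq

lemma grpRank_mono {A B : Subgroup Kˣ} (h : A ≤ B) : grpRank A ≤ grpRank B := by
  rw [grpRank_eq, grpRank_eq]
  exact Submodule.rank_mono (submod_mono h)

lemma finiteRank_mono {A B : Subgroup Kˣ} (h : A ≤ B) (hB : FiniteRank B) : FiniteRank A :=
  lt_of_le_of_lt (grpRank_mono h) hB

lemma grpRank_sup_le (A B : Subgroup Kˣ) : grpRank (A ⊔ B) ≤ grpRank A + grpRank B := by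
  rw [grpRank_eq, grpRank_eq, grpRank_eq, submod_sup]
  exact Submodule.rank_add_le_rank_add_rank _ _

lemma finiteRank_sup {A B : Subgroup Kˣ} (hA : FiniteRank A) (hB : FiniteRank B) :
    FiniteRank (A ⊔ B) :=
  lt_of_le_of_lt (grpRank_sup_le A B) (Cardinal.add_lt_aleph0 hA hB)

lemma grpRank_modular (A B : Subgroup Kˣ) :
    grpRank (A ⊔ B) + grpRank (A ⊓ B) = grpRank A + grpRank B := by
  rw [grpRank_eq, grpRank_eq, grpRank_eq, grpRank_eq, submod_sup, submod_inf]
  exact Submodule.rank_sup_add_rank_inf_eq _ _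

/-! #### Field-theoretic closure -/

def cl (t : Set K) : IntermediateField ℚ K :=
  (algebraicClosure ↥(IntermediateField.adjoin ℚ t) K).restrictScalars ℚ

lemma mem_cl {t : Set K} {x : K} :
    x ∈ cl t ↔ IsAlgebraic ↥(IntermediateField.adjoin ℚ t) x := by
  rw [cl, IntermediateField.mem_restrictScalars, mem_algebraicClosure_iff]

lemma mem_cl' {t : Set K} {x : K} :
    x ∈ (cl t : Set K) ↔ IsAlgebraic ↥(IntermediateField.adjoin ℚ t) x := by
  rw [SetLike.mem_coe, mem_cl]

lemma subset_cl (t : Set K) : t ⊆ cl t := by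
  intro x hx
  rw [mem_cl']
  exact isAlgebraic_algebraMap (⟨x, IntermediateField.subset_adjoin ℚ t hx⟩ :
    ↥(IntermediateField.adjoin ℚ t))

lemma cl_mono {s t : Set K} (h : s ⊆ t) : (cl s : Set K) ⊆ cl t := by
  intro x hx
  rw [mem_cl'] at hx ⊢
  have hle : (IntermediateField.adjoin ℚ s).toSubalgebra ≤
      (IntermediateField.adjoin ℚ t).toSubalgebra :=
    IntermediateField.adjoin.mono ℚ _ _ h
  exact hx.tower_top_of_subalgebra_le hle

lemma cl_trans {s t : Set K} (h : s ⊆ (cl t : Set K)) : (cl s : Set K) ⊆ cl t := by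
  intro x hx
  rw [mem_cl'] at hx ⊢
  set F := IntermediateField.adjoin ℚ t
  set E := IntermediateField.adjoin (↥F) s
  have hE : Algebra.IsAlgebraic ↥F ↥E :=
    (IntermediateField.isAlgebraic_adjoin_iff_isAlgebraic _ _).mpr (fun y hy => mem_cl.mp (h hy))
  have hle : (IntermediateField.adjoin ℚ s).toSubalgebra ≤
      (E.restrictScalars ℚ).toSubalgebra := by
    have h2 : IntermediateField.adjoin ℚ s ≤ E.restrictScalars ℚ :=
      IntermediateField.adjoin_le_iff.mpr (fun z hz => IntermediateField.subset_adjoin (↥F) s hz)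
    exact fun y hy => h2 hy
  have hx2 : IsAlgebraic ↥(E.restrictScalars ℚ) x := hx.tower_top_of_subalgebra_le hle
  have hx3 : IsAlgebraic ↥E x := hx2
  have : Algebra.IsIntegral ↥F ↥E := hE.isIntegral
  exact (isIntegral_trans (R := ↥F) (A := ↥E) x hx3.isIntegral).isAlgebraic

lemma isAlgebraic_algAdjoin_of_isAlgebraic_adjoin {w : Set K} {x : K}
    (h : IsAlgebraic ↥(IntermediateField.adjoin ℚ w) x) :
    IsAlgebraic ↥(Algebra.adjoin ℚ w) x := by
  classical
  set A := Algebra.adjoin ℚ w with hA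
  set L := IntermediateField.adjoin ℚ w with hL
  have hle : A ≤ L.toSubalgebra := IntermediateField.algebra_adjoin_le_adjoin ℚ w
  let f : ↥A →+* ↥L :=
    { toFun := fun a => ⟨a.1, hle a.2⟩
      map_one' := rfl
      map_mul' := fun _ _ => rfl
      map_zero' := rfl
      map_add' := fun _ _ => rfl }
  have hf : Function.Injective f := fun a b hab =>
    Subtype.ext (congrArg (Subtype.val : ↥L → K) hab)
  letI : Algebra ↥A ↥L := f.toAlgebra
  haveI : IsScalarTower ↥A ↥L K := IsScalarTower.of_algebraMap_eq (fun _ => rfl)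
  haveI : IsFractionRing ↥A ↥L := by
    constructor
    constructor
    · rintro ⟨y, hy⟩
      have hy0 : (y : K) ≠ 0 := by
        intro h0
        have : y = 0 := Subtype.ext h0
        exact nonZeroDivisors.ne_zero hy this
      have : (f y : K) ≠ 0 := hy0
      exact isUnit_iff_ne_zero.mpr (fun h0 => this (congrArg Subtype.val h0))
    · intro z
      obtain ⟨r, s, hz⟩ := (IntermediateField.mem_adjoin_iff ℚ (z : K)).mp z.2
      have hRmem : (MvPolynomial.aeval (Subtype.val : w → K)) r ∈ A := by
        have := (Algebra.adjoin_range_eq_range_aeval ℚ (Subtype.val : w → K)).ge ⟨r, rfl⟩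
        rwa [Subtype.range_coe] at this
      have hSmem : (MvPolynomial.aeval (Subtype.val : w → K)) s ∈ A := by
        have := (Algebra.adjoin_range_eq_range_aeval ℚ (Subtype.val : w → K)).ge ⟨s, rfl⟩
        rwa [Subtype.range_coe] at this
      by_cases hS : (MvPolynomial.aeval (Subtype.val : w → K)) s = 0
      · refine ⟨⟨0, 1⟩, ?_⟩
        have : (z : K) = 0 := by rw [hz, hS, div_zero]
        apply Subtype.ext
        show (z : K) * _ = _
        simp [this]
      · refine ⟨⟨⟨_, hRmem⟩, ⟨⟨_, hSmem⟩, mem_nonZeroDivisors_of_ne_zero (by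
          intro h0; exact hS (congrArg Subtype.val h0))⟩⟩, ?_⟩
        apply Subtype.ext
        show (z : K) * _ = _
        rw [hz]
        exact div_mul_cancel₀ _ hS
    · intro a b hab
      exact ⟨1, by rw [hf (Subtype.ext (congrArg Subtype.val hab))]⟩
  exact (IsFractionRing.isAlgebraic_iff ↥A ↥L K).mpr h

lemma algIndep_insert_iff {u : Set K} {x : K}
    (hu : AlgebraicIndependent ℚ ((↑) : u → K)) (hx : x ∉ u) :
    AlgebraicIndependent ℚ ((↑) : ↥(insert x u) → K) ↔
      Transcendental ↥(Algebra.adjoin ℚ u) x := by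
  classical
  have hopt := hu.option_iff_transcendental x
  rw [Subtype.range_coe] at hopt
  rw [← hopt]
  refine (algebraicIndependent_equiv' (R := ℚ) (A := K) (Set.subtypeInsertEquivOption hx)
    (f := fun o : Option u => o.elim x (↑)) (g := ((↑) : ↥(insert x u) → K)) ?_)
  ext ⟨y, hy⟩
  by_cases h : y = x <;> simp [h, Set.subtypeInsertEquivOption]

lemma isAlgebraic_cl_easy {u : Set K} {x : K} (h : IsAlgebraic ↥(Algebra.adjoin ℚ u) x) :
    x ∈ (cl u : Set K) :=
  mem_cl'.mpr (h.tower_top_of_subalgebra_le (IntermediateField.algebra_adjoin_le_adjoin ℚ u))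

lemma mem_cl_of_not_indep {u : Set K} {x : K}
    (hu : AlgebraicIndependent ℚ ((↑) : u → K)) (hx : x ∉ u)
    (h : ¬ AlgebraicIndependent ℚ ((↑) : ↥(insert x u) → K)) : x ∈ (cl u : Set K) := by
  have := (algIndep_insert_iff hu hx).not.mp h
  rw [Transcendental, not_not] at this
  exact isAlgebraic_cl_easy this

lemma indep_insert_of_not_mem_cl {u : Set K} {x : K}
    (hu : AlgebraicIndependent ℚ ((↑) : u → K)) (hx : x ∉ (cl u : Set K)) :
    AlgebraicIndependent ℚ ((↑) : ↥(insert x u) → K) := by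
  have hxu : x ∉ u := fun h => hx (subset_cl u h)
  refine (algIndep_insert_iff hu hxu).mpr ?_
  intro halg
  exact hx (isAlgebraic_cl_easy halg)

lemma not_mem_cl_diff {u : Set K} {x : K}
    (hu : AlgebraicIndependent ℚ ((↑) : u → K)) (hx : x ∈ u) :
    x ∉ (cl (u \ {x}) : Set K) := by
  intro hmem
  have hb := isAlgebraic_algAdjoin_of_isAlgebraic_adjoin (mem_cl'.mp hmem)
  have hxd : x ∉ u \ {x} := fun h => h.2 rfl
  have hins : AlgebraicIndependent ℚ ((↑) : ↥(insert x (u \ {x})) → K) := by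
    refine hu.mono ?_
    intro y hy
    rcases hy with rfl | hy
    · exact hx
    · exact hy.1
  have := (algIndep_insert_iff (hu.mono Set.diff_subset) hxd).mp hins
  exact this hb

lemma card_le_cl_aux (n : ℕ) : ∀ (s u : Set K), s.Finite → u.Finite → (u \ s).ncard = n →
    AlgebraicIndependent ℚ ((↑) : u → K) → u ⊆ (cl s : Set K) → u.ncard ≤ s.ncard := by
  induction n using Nat.strong_induction_on with
  | _ n IH =>
  intro s u hs hu hcard hindep hsub
  rcases Nat.eq_zero_or_pos n with rfl | hn
  · have : u \ s = ∅ := (Set.ncard_eq_zero (hu.diff (t := s))).mp hcard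
    exact Set.ncard_le_ncard (Set.diff_eq_empty.mp this) hs
  · obtain ⟨x, hxus⟩ : (u \ s).Nonempty := by
      rw [Set.nonempty_iff_ne_empty]
      intro h
      rw [h, Set.ncard_empty] at hcard; omega
    set t := u \ {x} with ht
    have htu : t ⊆ u := Set.diff_subset
    have htind : AlgebraicIndependent ℚ ((↑) : t → K) := hindep.mono htu
    obtain ⟨y, hys, hycl⟩ : ∃ y ∈ s, y ∉ (cl t : Set K) := by
      by_contra hcon
      push_neg at hcon
      have : (cl s : Set K) ⊆ cl t := cl_trans hcon
      exact not_mem_cl_diff hindep hxus.1 (this (hsub hxus.1))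
    have hyt : y ∉ t := fun h => hycl (subset_cl t h)
    set u' := insert y t with hu'
    have hind' : AlgebraicIndependent ℚ ((↑) : u' → K) :=
      indep_insert_of_not_mem_cl htind hycl
    have hsub' : u' ⊆ (cl s : Set K) := by
      intro z hz
      rcases hz with rfl | hz
      · exact subset_cl s hys
      · exact hsub (htu hz)
    have hu'f : u'.Finite := (hu.subset htu).insert y
    have hdiff : u' \ s ⊆ (u \ s) \ {x} := by
      intro z hz
      rcases hz.1 with rfl | hz1
      · exact absurd hys hz.2
      · exact ⟨⟨hz1.1, hz.2⟩, hz1.2⟩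
    have hlt : (u' \ s).ncard < n := by
      calc (u' \ s).ncard ≤ ((u \ s) \ {x}).ncard :=
            Set.ncard_le_ncard hdiff ((hu.diff (t := s)).diff (t := {x}))
        _ < (u \ s).ncard := Set.ncard_diff_singleton_lt_of_mem hxus (hu.diff (t := s))
        _ = n := hcard
    have hcard' : u'.ncard = u.ncard := by
      rw [hu', Set.ncard_insert_of_notMem hyt (hu.subset htu), ht,
        Set.ncard_diff_singleton_of_mem hxus.1]
      have : 1 ≤ u.ncard := (Set.ncard_pos hu).mpr ⟨x, hxus.1⟩
      omega
    have := IH _ hlt s u' hs hu'f rfl hind' hsub'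
    omega

lemma card_le_cl {s u : Set K} (hs : s.Finite) (hu : u.Finite)
    (hindep : AlgebraicIndependent ℚ ((↑) : u → K)) (hsub : u ⊆ (cl s : Set K)) :
    u.ncard ≤ s.ncard :=
  card_le_cl_aux (u \ s).ncard s u hs hu rfl hindep hsub

/-! #### Algebraic independence implies multiplicative independence -/

lemma finsupp_sum_single_apply {α : Type*} [DecidableEq α] (fin : Finset α) (a : α → ℕ) {x : α}
    (hx : x ∈ fin) : (∑ i ∈ fin, Finsupp.single i (a i)) x = a x := by
  rw [Finset.sum_apply']
  rw [Finset.sum_eq_single x]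
  · simp
  · intro b _ hbx; simp [Finsupp.single_apply, hbx]
  · intro h; exact absurd hx h

lemma finsupp_prod_sum_single {α : Type*} [DecidableEq α] (fin : Finset α) (a : α → ℕ)
    (z : α → K) : ((∑ i ∈ fin, Finsupp.single i (a i)).prod fun i n => z i ^ n) =
      ∏ i ∈ fin, z i ^ a i := by
  have hsupp : (∑ i ∈ fin, Finsupp.single i (a i)).support ⊆ fin := by
    intro x hx
    obtain ⟨i, hi, hxi⟩ := Finsupp.mem_support_finset_sum x hx
    have h := Finsupp.mem_support_iff.mp hxi
    have : x = i := by
      by_contra hne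
      exact h (by simp [Finsupp.single_apply, Ne.symm hne])
    exact this ▸ hi
  unfold Finsupp.prod
  calc (∏ x ∈ (∑ i ∈ fin, Finsupp.single i (a i)).support,
          z x ^ ((∑ i ∈ fin, Finsupp.single i (a i)) x))
      = ∏ x ∈ (∑ i ∈ fin, Finsupp.single i (a i)).support, z x ^ a x :=
        Finset.prod_congr rfl (fun x hx => by
          rw [finsupp_sum_single_apply fin a (hsupp hx)])
    _ = ∏ i ∈ fin, z i ^ a i := by
        refine Finset.prod_subset hsupp (fun x hxf hxs => ?_)
        have h0 : (∑ i ∈ fin, Finsupp.single i (a i)) x = 0 := Finsupp.notMem_support_iff.mp hxs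
        rw [finsupp_sum_single_apply fin a hxf] at h0
        rw [h0, pow_zero]

lemma card_le_rank_of_algIndep {S : Subgroup Kˣ} {t : Set K}
    (hts : t ⊆ Units.val '' (S : Set Kˣ))
    (ht : AlgebraicIndependent ℚ ((↑) : t → K)) :
    Cardinal.mk t ≤ Module.rank ℤ (Additive ↥S) := by
  classical
  have hchoice : ∀ i : t, ∃ u : ↥S, ((u : Kˣ) : K) = (i : K) := by
    rintro ⟨x, hx⟩
    obtain ⟨u, hu, hux⟩ := hts hx
    exact ⟨⟨u, hu⟩, hux⟩
  choose g hg using hchoice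
  have hz : ∀ i : t, (i : K) ≠ 0 := by
    intro i
    rw [← hg i]
    exact Units.ne_zero _
  have hli : LinearIndependent ℤ (fun i : t => Additive.ofMul (g i)) := by
    rw [linearIndependent_iff']
    intro fin c hsum i₀ hi₀
    by_contra hc0
    have hrel : (∏ i ∈ fin, (g i : Kˣ) ^ (c i)) = 1 := by
      have := congrArg (fun a : Additive ↥S => ((Additive.toMul a : ↥S) : Kˣ)) hsum
      simpa [toMul_sum, toMul_zsmul] using this
    have hrelK : (∏ i ∈ fin, (i : K) ^ (c i)) = 1 := by
      have h2 : ((∏ i ∈ fin, (g i : Kˣ) ^ c i : Kˣ) : K) = ∏ i ∈ fin, (i : K) ^ c i := by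
        rw [← Units.coeHom_apply, map_prod]
        exact Finset.prod_congr rfl (fun i _ => by
          rw [Units.coeHom_apply, Units.val_zpow_eq_zpow_val, hg i])
      rw [← h2, hrel, Units.val_one]
    set a : t → ℕ := fun i => (c i).toNat with ha
    set b : t → ℕ := fun i => (-c i).toNat with hb
    have hab : a i₀ ≠ b i₀ := by
      simp only [ha, hb]
      omega
    have hsplit : (∏ i ∈ fin, (i : K) ^ (a i)) = ∏ i ∈ fin, (i : K) ^ (b i) := by
      have : (∏ i ∈ fin, (i : K) ^ (a i)) =
          (∏ i ∈ fin, (i : K) ^ (c i)) * ∏ i ∈ fin, (i : K) ^ (b i) := by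
        rw [← Finset.prod_mul_distrib]
        refine Finset.prod_congr rfl (fun i _ => ?_)
        rw [← zpow_natCast (i : K) (a i), ← zpow_natCast (i : K) (b i),
          ← zpow_add₀ (hz i)]
        congr 1
        simp only [ha, hb]
        omega
      rw [this, hrelK, one_mul]
    set d : t →₀ ℕ := ∑ i ∈ fin, Finsupp.single i (a i) with hd
    set e : t →₀ ℕ := ∑ i ∈ fin, Finsupp.single i (b i) with he
    have hde : d ≠ e := by
      intro h
      have := congrArg (fun f : t →₀ ℕ => f i₀) h
      simp only [hd, he] at this
      rw [finsupp_sum_single_apply fin a hi₀, finsupp_sum_single_apply fin b hi₀] at this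
      exact hab this
    set p : MvPolynomial t ℚ := MvPolynomial.monomial d 1 - MvPolynomial.monomial e 1 with hp
    have hpne : p ≠ 0 := by
      intro h
      have := congrArg (MvPolynomial.coeff d) h
      simp [hp, MvPolynomial.coeff_monomial, hde, Ne.symm hde] at this
    have hpz : MvPolynomial.aeval ((↑) : t → K) p = 0 := by
      simp only [hp, map_sub, MvPolynomial.aeval_monomial, map_one, one_mul]
      rw [hd, he, finsupp_prod_sum_single, finsupp_prod_sum_single, hsplit, sub_self]
    exact hpne (ht.eq_zero_of_aeval_eq_zero p hpz)
  have := hli.cardinal_le_rank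
  simpa using this

/-! #### td lemmas -/

lemma le_tdSet {s t : Set K} (hsub : t ⊆ s) (hind : AlgebraicIndependent ℚ ((↑) : t → K)) :
    Cardinal.mk t ≤ tdSet s :=
  le_ciSup (Cardinal.bddAbove_range _)
    (⟨t, hsub, hind⟩ : {t : Set K // t ⊆ s ∧ AlgebraicIndependent ℚ ((↑) : t → K)})

lemma tdSet_le {s : Set K} {c : Cardinal}
    (h : ∀ t : Set K, t ⊆ s → AlgebraicIndependent ℚ ((↑) : t → K) → #t ≤ c) :
    tdSet s ≤ c :=
  ciSup_le' (fun t => h t.1 t.2.1 t.2.2)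

lemma td_le_grpRank (S : Subgroup Kˣ) : td S ≤ grpRank S :=
  tdSet_le (fun _ hsub hind => card_le_rank_of_algIndep hsub hind)

lemma td_lt_aleph0 {S : Subgroup Kˣ} (h : FiniteRank S) : td S < ℵ₀ :=
  lt_of_le_of_lt (td_le_grpRank S) h

lemma exists_indep_card_eq {s : Set K} (h : tdSet s < ℵ₀) :
    ∃ t : Set K, t ⊆ s ∧ AlgebraicIndependent ℚ ((↑) : t → K) ∧ #t = tdSet s := by
  obtain ⟨n, hn⟩ := Cardinal.lt_aleph0.mp h
  rcases Nat.eq_zero_or_pos n with rfl | hpos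
  · refine ⟨∅, Set.empty_subset s, ?_, by simp [hn]⟩
    exact algebraicIndependent_empty (K := ℚ) (A := K)
  · have hnot : ¬ tdSet s ≤ ((n - 1 : ℕ) : Cardinal) := by
      rw [hn]
      intro hle
      have := Nat.cast_le.mp hle
      omega
    have : ¬ ∀ t : Set K, t ⊆ s → AlgebraicIndependent ℚ ((↑) : t → K) →
        Cardinal.mk t ≤ ((n - 1 : ℕ) : Cardinal) := fun hh => hnot (tdSet_le hh)
    push_neg at this
    obtain ⟨t, hsub, hind, hgt⟩ := this
    refine ⟨t, hsub, hind, ?_⟩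
    have hle : #t ≤ tdSet s := le_tdSet hsub hind
    rw [hn] at hle ⊢
    obtain ⟨m, hm⟩ := Cardinal.lt_aleph0.mp (lt_of_le_of_lt hle (Cardinal.nat_lt_aleph0 n))
    rw [hm] at hle hgt ⊢
    have h1 := Nat.cast_le.mp hle
    have h2 : (n - 1 : ℕ) < m := by exact_mod_cast hgt
    have : m = n := by omega
    rw [this]

lemma ncard_eq_toNat {t : Set K} : t.ncard = (#t).toNat := by
  rw [← Nat.card_coe_set_eq]
  rfl

/-! #### Submodularity of the predimension -/

lemma td_submod {A B : Subgroup Kˣ} (hA : FiniteRank A) (hB : FiniteRank B) :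
    (td (A ⊔ B)).toNat + (td (A ⊓ B)).toNat ≤ (td A).toNat + (td B).toNat := by
  classical
  set sA : Set K := Units.val '' (A : Set Kˣ) with hsA
  set sB : Set K := Units.val '' (B : Set Kˣ) with hsB
  have hMfin : td (A ⊓ B) < ℵ₀ := td_lt_aleph0 (finiteRank_mono inf_le_left hA)
  obtain ⟨t₀, ht₀sub, ht₀ind, ht₀card⟩ := exists_indep_card_eq hMfin
  have ht₀A : t₀ ⊆ sA := by
    refine ht₀sub.trans ?_
    intro x hx
    obtain ⟨u, hu, rfl⟩ := hx
    exact ⟨u, hu.1, rfl⟩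
  have ht₀B : t₀ ⊆ sB := by
    refine ht₀sub.trans ?_
    intro x hx
    obtain ⟨u, hu, rfl⟩ := hx
    exact ⟨u, hu.2, rfl⟩
  obtain ⟨tA, htA0, htAmax⟩ := exists_maximal_algebraicIndependent t₀ sA ht₀A ht₀ind
  obtain ⟨tB, htB0, htBmax⟩ := exists_maximal_algebraicIndependent t₀ sB ht₀B ht₀ind
  have htAind := htAmax.prop.1
  have htAsub := htAmax.prop.2
  have htBind := htBmax.prop.1
  have htBsub := htBmax.prop.2
  have htAcard : #tA ≤ td A := le_tdSet htAsub htAind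
  have htBcard : #tB ≤ td B := le_tdSet htBsub htBind
  have htAfin : tA.Finite := Cardinal.lt_aleph0_iff_set_finite.mp
    (lt_of_le_of_lt htAcard (td_lt_aleph0 hA))
  have htBfin : tB.Finite := Cardinal.lt_aleph0_iff_set_finite.mp
    (lt_of_le_of_lt htBcard (td_lt_aleph0 hB))
  -- every element of sA is in cl tA
  have hclA : sA ⊆ (cl tA : Set K) := by
    intro x hx
    by_cases hxt : x ∈ tA
    · exact subset_cl tA hxt
    · refine mem_cl_of_not_indep htAind hxt ?_
      intro hins
      have hle : tA ⊆ insert x tA := Set.subset_insert x tA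
      have := htAmax.2 ⟨hins, Set.insert_subset hx htAsub⟩ hle
      exact hxt (this (Set.mem_insert x tA))
  have hclB : sB ⊆ (cl tB : Set K) := by
    intro x hx
    by_cases hxt : x ∈ tB
    · exact subset_cl tB hxt
    · refine mem_cl_of_not_indep htBind hxt ?_
      intro hins
      have hle : tB ⊆ insert x tB := Set.subset_insert x tB
      have := htBmax.2 ⟨hins, Set.insert_subset hx htBsub⟩ hle
      exact hxt (this (Set.mem_insert x tB))
  -- the join is inside cl (tA ∪ tB)
  have hclJ : Units.val '' ((A ⊔ B : Subgroup Kˣ) : Set Kˣ) ⊆ (cl (tA ∪ tB) : Set K) := by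
    rintro x ⟨u, hu, rfl⟩
    obtain ⟨y, hy, z, hz, hyz⟩ := Subgroup.mem_sup.mp hu
    have hyc : (y : K) ∈ (cl (tA ∪ tB) : Set K) :=
      cl_mono Set.subset_union_left (hclA ⟨y, hy, rfl⟩)
    have hzc : (z : K) ∈ (cl (tA ∪ tB) : Set K) :=
      cl_mono Set.subset_union_right (hclB ⟨z, hz, rfl⟩)
    have : ((y * z : Kˣ) : K) ∈ cl (tA ∪ tB) := by
      rw [Units.val_mul]
      exact mul_mem hyc hzc
    rw [hyz] at this
    exact this
  -- bound td (A ⊔ B)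
  have hJle : td (A ⊔ B) ≤ #(↥(tA ∪ tB)) := by
    refine tdSet_le (fun u husub huind => ?_)
    have hufin : u.Finite := by
      refine Cardinal.lt_aleph0_iff_set_finite.mp ?_
      exact lt_of_le_of_lt (card_le_rank_of_algIndep husub huind) (finiteRank_sup hA hB)
    have hcard := card_le_cl (htAfin.union htBfin) hufin huind (fun x hx => hclJ (husub hx))
    rw [ncard_eq_toNat, ncard_eq_toNat] at hcard
    have h1 : #u = ((#u).toNat : Cardinal) :=
      (Cardinal.cast_toNat_of_lt_aleph0 hufin.lt_aleph0).symm
    have h2 : #(↥(tA ∪ tB)) = ((#(↥(tA ∪ tB))).toNat : Cardinal) :=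
      (Cardinal.cast_toNat_of_lt_aleph0 (htAfin.union htBfin).lt_aleph0).symm
    rw [h1, h2]
    exact_mod_cast hcard
  -- numeric bookkeeping
  have hJfin : td (A ⊔ B) < ℵ₀ := lt_of_le_of_lt hJle (htAfin.union htBfin).lt_aleph0
  have hUnion : (tA ∪ tB).ncard + (tA ∩ tB).ncard = tA.ncard + tB.ncard :=
    Set.ncard_union_add_ncard_inter tA tB htAfin htBfin
  have ht0sub' : t₀ ⊆ tA ∩ tB := Set.subset_inter htA0 htB0
  have ht0card : t₀.ncard ≤ (tA ∩ tB).ncard :=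
    Set.ncard_le_ncard ht0sub' (htAfin.inter_of_left tB)
  have hJn : (td (A ⊔ B)).toNat ≤ (tA ∪ tB).ncard := by
    rw [ncard_eq_toNat]
    exact Cardinal.toNat_le_toNat hJle (htAfin.union htBfin).lt_aleph0
  have hMn : (td (A ⊓ B)).toNat = t₀.ncard := by
    rw [ncard_eq_toNat, ht₀card]
    rfl
  have hAn : tA.ncard ≤ (td A).toNat := by
    rw [ncard_eq_toNat]
    exact Cardinal.toNat_le_toNat htAcard (td_lt_aleph0 hA)
  have hBn : tB.ncard ≤ (td B).toNat := by
    rw [ncard_eq_toNat]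
    exact Cardinal.toNat_le_toNat htBcard (td_lt_aleph0 hB)
  omega

lemma rank_supmod (G A B : Subgroup Kˣ) (hA : FiniteRank A) (hB : FiniteRank B) :
    (grpRank (A ⊓ G)).toNat + (grpRank (B ⊓ G)).toNat ≤
      (grpRank ((A ⊔ B) ⊓ G)).toNat + (grpRank ((A ⊓ B) ⊓ G)).toNat := by
  have hmod := grpRank_modular (A ⊓ G) (B ⊓ G)
  have hinf : (A ⊓ G) ⊓ (B ⊓ G) = (A ⊓ B) ⊓ G := by
    ext x
    simp only [Subgroup.mem_inf]
    tauto
  have hsup : (A ⊓ G) ⊔ (B ⊓ G) ≤ (A ⊔ B) ⊓ G :=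
    sup_le (le_inf (inf_le_left.trans le_sup_left) inf_le_right)
      (le_inf (inf_le_left.trans le_sup_right) inf_le_right)
  have hcard : grpRank (A ⊓ G) + grpRank (B ⊓ G) ≤
      grpRank ((A ⊔ B) ⊓ G) + grpRank ((A ⊓ B) ⊓ G) := by
    rw [← hmod, ← hinf]
    exact add_le_add_left (grpRank_mono hsup) _
  have hJfin : grpRank ((A ⊔ B) ⊓ G) < ℵ₀ :=
    finiteRank_mono inf_le_left (finiteRank_sup hA hB)
  have hMfin : grpRank ((A ⊓ B) ⊓ G) < ℵ₀ :=
    finiteRank_mono (inf_le_left.trans inf_le_left) hA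
  have hAfin : grpRank (A ⊓ G) < ℵ₀ := finiteRank_mono inf_le_left hA
  have hBfin : grpRank (B ⊓ G) < ℵ₀ := finiteRank_mono inf_le_left hB
  have := Cardinal.toNat_le_toNat hcard (Cardinal.add_lt_aleph0 hJfin hMfin)
  rwa [Cardinal.toNat_add hAfin hBfin, Cardinal.toNat_add hJfin hMfin] at this

lemma delta_submod (G : Subgroup Kˣ) {A B : Subgroup Kˣ} (hA : FiniteRank A)
    (hB : FiniteRank B) :
    delta G (A ⊔ B) + delta G (A ⊓ B) ≤ delta G A + delta G B := by
  have h1 := td_submod hA hB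
  have h2 := rank_supmod G A B hA hB
  unfold delta
  omega

end Aux

/-- The intersection of two finite-rank strong subgroups of `Kˣ` is strong. -/
theorem strong_inf {K : Type*} [Field K] [CharZero K] (G Y₁ Y₂ : Subgroup Kˣ)
    (h1 : FiniteRank Y₁) (h2 : FiniteRank Y₂)
    (hs1 : Strong G Y₁) (hs2 : Strong G Y₂) : Strong G (Y₁ ⊓ Y₂) := by
  intro W hW hYW _
  have hstep1 : delta G (W ⊓ Y₁) ≤ delta G W := by
    have h1' := hs1 (W ⊔ Y₁) (finiteRank_sup hW h1) le_sup_right le_top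
    have hsm := delta_submod G hW h1
    omega
  have hW' : FiniteRank (W ⊓ Y₁) := finiteRank_mono inf_le_left hW
  have hstep2 : delta G ((W ⊓ Y₁) ⊓ Y₂) ≤ delta G (W ⊓ Y₁) := by
    have h2' := hs2 ((W ⊓ Y₁) ⊔ Y₂) (finiteRank_sup hW' h2) le_sup_right le_top
    have hsm := delta_submod G hW' h2
    omega
  have hEq : (W ⊓ Y₁) ⊓ Y₂ = Y₁ ⊓ Y₂ := by
    rw [inf_assoc]
    exact inf_eq_right.mpr hYW
  calc delta G (Y₁ ⊓ Y₂) = delta G ((W ⊓ Y₁) ⊓ Y₂) := by rw [hEq]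
    _ ≤ delta G (W ⊓ Y₁) := hstep2
    _ ≤ delta G W := hstep1

end GreenPoints

end
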